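/- Ω' = 𝒢. That is: for every coherent sequence (ω_n)_n ∈ Ω, the termwise reduction (ω'_n)_n belongs to G and is locally eventually constant; and conversely, every locally eventually constant sequence (g_n)_n ∈ G equals (ω'_n)_n for some (ω_n)_n ∈ Ω. -/

import Mathlib

open Classical
noncomputable section

namespace GCG

/-- One-step backtrack reduction of a word: replace some substring `u v u` by `u`. -/
def ReduceStep {V : Type*} (l r : List V) : Prop :=
  ∃ (p s : List V) (u v : V), l = p ++ [u, v, u] ++ s ∧ r = p ++ [u] ++ s

/-- A word is reduced if it admits no one-step reduction. -/
def IsReduced {V : Type*} (l : List V) : Prop := ∀ r, ¬ ReduceStep l r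

/-- The reduction `ω'` of a word: the (for words in a simple graph, unique) reduced
word obtained from it by repeatedly replacing substrings `u v u` by `u`. -/
def reduce {V : Type*} (l : List V) : List V :=
  if h : ∃ r, Relation.ReflTransGen ReduceStep l r ∧ IsReduced r then h.choose else l

/-- Compress every maximal constant substring `u u ⋯ u` to the single letter `u`. -/
def compress {V : Type*} : List V → List V
  | [] => []
  | [a] => [a]
  | a :: b :: t => if a = b then compress (b :: t) else a :: compress (b :: t)

/-- Delete–Replace–Compress along `f`: delete the letters sent into `S`
(the subdivision points), replace the remaining letters by their images,
and compress maximal constant substrings. -/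
def DRC {V' V S : Type*} (f : V' → V ⊕ S) (w : List V') : List V :=
  compress (w.filterMap fun v => (f v).getLeft?)

/-- A word in a simple graph: a finite list of vertices in which consecutive
letters are distinct and joined by an edge. -/
def IsWord {V : Type*} (G : SimpleGraph V) (l : List V) : Prop := l.Chain' G.Adj

/-- A loop word at `x`: a word that starts and ends with `x`. -/
def IsLoopWord {V : Type*} (G : SimpleGraph V) (x : V) (l : List V) : Prop :=
  l.Chain' G.Adj ∧ l.head? = some x ∧ l.getLast? = some x

/-- Concatenation of loop words: the duplicated base letter is dropped. -/
def lconcat {V : Type*} (ω ξ : List V) : List V := ω.dropLast ++ ξ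

/-- `Gs` (on vertex set `V ⊕ S`) is the subdivision of `G` in which every edge is
evenly subdivided into `d` edges: every edge of `G` is replaced by a path of
length `d` through fresh interior vertices from `S`, these paths are compatible
with edge reversal, their interiors are pairwise disjoint, they exhaust `S`, and
their steps are exactly the edges of `Gs`. -/
def IsEvenSubdivision {V S : Type*} (G : SimpleGraph V) (d : ℕ)
    (Gs : SimpleGraph (V ⊕ S)) : Prop :=
  ∃ P : G.Dart → Fin (d + 1) → V ⊕ S,
    (∀ e, P e 0 = Sum.inl e.toProd.1) ∧
    (∀ e, P e (Fin.last d) = Sum.inl e.toProd.2) ∧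
    (∀ e (i : Fin (d + 1)), 0 < i.val → i.val < d → ∃ s : S, P e i = Sum.inr s) ∧
    (∀ e, Function.Injective (P e)) ∧
    (∀ e (i : Fin (d + 1)), P e.symm i = P e i.rev) ∧
    (∀ s : S, ∃ e i, P e i = Sum.inr s) ∧
    (∀ e e' (i i' : Fin (d + 1)), 0 < i.val → i.val < d → P e i = P e' i' →
      (e' = e ∧ i' = i) ∨ (e' = e.symm ∧ i' = i.rev)) ∧
    (∀ a b, Gs.Adj a b ↔ ∃ e, ∃ i : Fin d, P e i.castSucc = a ∧ P e i.succ = b)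

/-- The inverse sequence of finite connected simple graphs `X_n` with even
subdivisions `X*_n` and simplicial bonding surjections `f_n : X_{n+1} → X*_n`
mapping every edge onto an edge, together with coherent base vertices `x_n`. -/
structure GraphTower where
  V : ℕ → Type
  S : ℕ → Type
  finV : ∀ n, Finite (V n)
  G : ∀ n, SimpleGraph (V n)
  conn : ∀ n, (G n).Connected
  d : ℕ → ℕ
  two_le_d : ∀ n, 2 ≤ d n
  Gs : ∀ n, SimpleGraph (V n ⊕ S n)
  subdiv : ∀ n, IsEvenSubdivision (G n) (d n) (Gs n)
  f : ∀ n, V (n + 1) → V n ⊕ S n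
  f_surj : ∀ n, Function.Surjective (f n)
  f_simplicial : ∀ n ⦃u v⦄, (G (n + 1)).Adj u v → (Gs n).Adj (f n u) (f n v)
  f_edge_surj : ∀ n ⦃a b⦄, (Gs n).Adj a b →
    ∃ u v, (G (n + 1)).Adj u v ∧ f n u = a ∧ f n v = b
  x : ∀ n, V n
  f_base : ∀ n, f n (x (n + 1)) = Sum.inl (x n)

namespace GraphTower

/-- The projection `φ_n = DRC_n`. -/
def phi (T : GraphTower) (n : ℕ) : List (T.V (n + 1)) → List (T.V n) := DRC (T.f n)

/-- The composite projection `φ_n ∘ φ_{n+1} ∘ ⋯ ∘ φ_{n+m-1}` (the identity for `m = 0`). -/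
def proj (T : GraphTower) (n : ℕ) : (m : ℕ) → List (T.V (n + m)) → List (T.V n)
  | 0, w => w
  | m + 1, w => T.proj n m (T.phi (n + m) w)

/-- Membership in `Ω = lim←(Ω_n, φ_n)`: a coherent sequence of loop words. -/
def MemOmega (T : GraphTower) (ω : ∀ n, List (T.V n)) : Prop :=
  (∀ n, IsLoopWord (T.G n) (T.x n) (ω n)) ∧ ∀ n, T.phi n (ω (n + 1)) = ω n

/-- Membership in `G = lim←(Ω'_n, φ'_n)`: a `φ'`-coherent sequence of reduced loop words. -/
def MemG (T : GraphTower) (g : ∀ n, List (T.V n)) : Prop :=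
  (∀ n, IsLoopWord (T.G n) (T.x n) (g n) ∧ IsReduced (g n)) ∧
    ∀ n, reduce (T.phi n (g (n + 1))) = g n

/-- A sequence is locally eventually constant if for every fixed level `n` the
unreduced projections of its later terms to level `n` are eventually constant. -/
def LEC (T : GraphTower) (g : ∀ n, List (T.V n)) : Prop :=
  ∀ n, ∃ M, ∀ m, M ≤ m → T.proj n m (g (n + m)) = T.proj n M (g (n + M))

/-- `ω` is the stabilization `←g` of `g`: for every level `n`, the projections of
the later terms of `g` to level `n` eventually equal `ω n`. -/
def IsStabilization (T : GraphTower) (g ω : ∀ n, List (T.V n)) : Prop :=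
  ∀ n, ∃ M, ∀ m, M ≤ m → T.proj n m (g (n + m)) = ω n

/-- The identity word sequence `(x_n)_n`. -/
def seqOne (T : GraphTower) : ∀ n, List (T.V n) := fun n => [T.x n]

/-- Termwise concatenation followed by termwise reduction. -/
def seqMul (T : GraphTower) (g h : ∀ n, List (T.V n)) : ∀ n, List (T.V n) :=
  fun n => reduce (lconcat (g n) (h n))

/-- Termwise reversal. -/
def seqInv (T : GraphTower) (g : ∀ n, List (T.V n)) : ∀ n, List (T.V n) :=
  fun n => (g n).reverse

/-- Membership in `←𝒢`: the stabilization of some locally eventually constant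
element of `G`. -/
def MemSG (T : GraphTower) (ω : ∀ n, List (T.V n)) : Prop :=
  ∃ g, T.MemG g ∧ T.LEC g ∧ T.IsStabilization g ω

/-- `τ = ω ∗ ξ`: termwise concatenation, followed by termwise reduction,
followed by stabilization. -/
def star (T : GraphTower) (ω ξ τ : ∀ n, List (T.V n)) : Prop :=
  T.IsStabilization (fun n => reduce (lconcat (ω n) (ξ n))) τ

end GraphTower

end GCG

namespace GCG

section Rewriting

variable {V : Type*}

lemma ReduceStep.length_lt {l r : List V} (h : ReduceStep l r) : r.length < l.length := by
  obtain ⟨p, s, u, v, rfl, rfl⟩ := h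
  simp [List.length_append]

lemma exists_reduced (l : List V) :
    ∃ r, Relation.ReflTransGen ReduceStep l r ∧ IsReduced r := by
  by_cases h : IsReduced l
  · exact ⟨l, .refl, h⟩
  · simp only [IsReduced, not_forall, not_not] at h
    obtain ⟨r, hr⟩ := h
    have hlt := hr.length_lt
    obtain ⟨r2, h1, h2⟩ := exists_reduced r
    exact ⟨r2, .head hr h1, h2⟩
termination_by l.length

lemma ReduceStep.cons {a : V} {l r : List V} (h : ReduceStep l r) :
    ReduceStep (a :: l) (a :: r) := by
  obtain ⟨p, s, u, v, rfl, rfl⟩ := h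
  exact ⟨a :: p, s, u, v, rfl, rfl⟩

lemma reflGen_reduceStep_cons {a : V} {l r : List V}
    (h : Relation.ReflGen ReduceStep l r) :
    Relation.ReflGen ReduceStep (a :: l) (a :: r) := by
  cases h with
  | refl => exact .refl
  | single h => exact .single h.cons

/-- Local confluence, aligned case: one redex at the very start. -/
lemma lconf_aux (p2 s1 s2 : List V) (u1 v1 u2 v2 : V)
    (h : [u1, v1, u1] ++ s1 = p2 ++ [u2, v2, u2] ++ s2) :
    ∃ dd, Relation.ReflGen ReduceStep ([u1] ++ s1) dd ∧
      Relation.ReflGen ReduceStep (p2 ++ [u2] ++ s2) dd := by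
  match p2 with
  | [] =>
    simp only [List.nil_append, List.cons_append, List.cons.injEq, List.nil_append] at h ⊢
    obtain ⟨rfl, rfl, -, rfl⟩ := h
    exact ⟨u1 :: s1, .refl, .refl⟩
  | [w] =>
    simp only [List.cons_append, List.nil_append, List.cons.injEq] at h
    obtain ⟨rfl, rfl, rfl, rfl⟩ := h
    exact ⟨u1 :: v1 :: s2, .refl, .refl⟩
  | [w1, w2] =>
    simp only [List.cons_append, List.nil_append, List.cons.injEq] at h
    obtain ⟨rfl, rfl, rfl, rfl⟩ := h
    exact ⟨u1 :: s2, .single ⟨[], s2, u1, v2, rfl, rfl⟩,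
      .single ⟨[], s2, u1, v1, rfl, rfl⟩⟩
  | w1 :: w2 :: w3 :: q =>
    simp only [List.cons_append, List.nil_append, List.cons.injEq] at h
    obtain ⟨rfl, rfl, rfl, rfl⟩ := h
    refine ⟨u1 :: (q ++ [u2] ++ s2), .single ⟨u1 :: q, s2, u2, v2, by simp, by simp⟩,
      .single ⟨[], q ++ [u2] ++ s2, u1, v1, by simp, by simp⟩⟩

lemma lconf : ∀ (p1 s1 p2 s2 : List V) (u1 v1 u2 v2 : V),
    p1 ++ [u1, v1, u1] ++ s1 = p2 ++ [u2, v2, u2] ++ s2 →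
    ∃ dd, Relation.ReflGen ReduceStep (p1 ++ [u1] ++ s1) dd ∧
      Relation.ReflGen ReduceStep (p2 ++ [u2] ++ s2) dd := by
  intro p1
  induction p1 with
  | nil =>
    intro s1 p2 s2 u1 v1 u2 v2 h
    exact lconf_aux p2 s1 s2 u1 v1 u2 v2 h
  | cons a p1 ih =>
    intro s1 p2 s2 u1 v1 u2 v2 h
    match p2 with
    | [] =>
      obtain ⟨dd, h1, h2⟩ := lconf_aux (a :: p1) s2 s1 u2 v2 u1 v1 h.symm
      exact ⟨dd, h2, h1⟩
    | b :: p2 =>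
      have hab : a = b ∧ p1 ++ [u1, v1, u1] ++ s1 = p2 ++ [u2, v2, u2] ++ s2 := by
        simpa using h
      obtain ⟨rfl, h'⟩ := hab
      obtain ⟨dd, h1, h2⟩ := ih s1 p2 s2 u1 v1 u2 v2 h'
      exact ⟨a :: dd, by simpa using reflGen_reduceStep_cons h1, by simpa using reflGen_reduceStep_cons h2⟩

lemma reduceStep_locally_confluent (l r1 r2 : List V)
    (h1 : ReduceStep l r1) (h2 : ReduceStep l r2) :
    ∃ dd, Relation.ReflGen ReduceStep r1 dd ∧
      Relation.ReflTransGen ReduceStep r2 dd := by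
  obtain ⟨p1, s1, u1, v1, rfl, rfl⟩ := h1
  obtain ⟨p2, s2, u2, v2, hl, rfl⟩ := h2
  obtain ⟨dd, hd1, hd2⟩ := lconf p1 s1 p2 s2 u1 v1 u2 v2 hl
  exact ⟨dd, hd1, hd2.to_reflTransGen⟩

lemma reduced_of_rtg_reduced {l r : List V} (hl : IsReduced l)
    (h : Relation.ReflTransGen ReduceStep l r) : r = l := by
  cases h.cases_head with
  | inl h => exact h.symm
  | inr h => exact absurd h.choose_spec.1 (hl _)

lemma reduced_unique {l r1 r2 : List V}
    (h1 : Relation.ReflTransGen ReduceStep l r1)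
    (h2 : Relation.ReflTransGen ReduceStep l r2)
    (hr1 : IsReduced r1) (hr2 : IsReduced r2) : r1 = r2 := by
  obtain ⟨dd, hd1, hd2⟩ := Relation.church_rosser
    (fun a b c hab hac => reduceStep_locally_confluent a b c hab hac) h1 h2
  rw [← reduced_of_rtg_reduced hr1 hd1, ← reduced_of_rtg_reduced hr2 hd2]

lemma reduce_spec (l : List V) :
    Relation.ReflTransGen ReduceStep l (reduce l) ∧ IsReduced (reduce l) := by
  rw [reduce, dif_pos (exists_reduced l)]
  exact (exists_reduced l).choose_spec

lemma reduce_isReduced (l : List V) : IsReduced (reduce l) := (reduce_spec l).2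

lemma rtg_reduce (l : List V) : Relation.ReflTransGen ReduceStep l (reduce l) :=
  (reduce_spec l).1

lemma reduce_eq_of_rtg {l r : List V} (h : Relation.ReflTransGen ReduceStep l r) :
    reduce l = reduce r :=
  reduced_unique (rtg_reduce l) (h.trans (rtg_reduce r)) (reduce_isReduced l)
    (reduce_isReduced r)

lemma IsReduced.reduce_eq {l : List V} (h : IsReduced l) : reduce l = l :=
  reduced_unique (rtg_reduce l) .refl (reduce_isReduced l) h

lemma rtg_length_le {l r : List V} (h : Relation.ReflTransGen ReduceStep l r) :
    r.length ≤ l.length ∧ (r.length = l.length → r = l) := by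
  induction h using Relation.ReflTransGen.head_induction_on with
  | refl => exact ⟨le_rfl, fun _ => rfl⟩
  | head hstep _ ih =>
    have := hstep.length_lt
    exact ⟨by omega, fun he => by omega⟩

end Rewriting

section Compress

variable {V : Type*}

lemma compress_cons (x : V) (T : List V) :
    compress (x :: T) = if T.head? = some x then compress T else x :: compress T := by
  cases T with
  | nil => simp [compress]
  | cons t T' => simp [compress, eq_comm]

lemma compress_head? (l : List V) : (compress l).head? = l.head? := by
  induction l with
  | nil => rfl
  | cons x T ih =>
    rw [compress_cons]
    split
    · rw [ih]; simp_all
    · simp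

lemma cons_getLast?_of_ne_nil {x : V} {L : List V} (h : L ≠ []) :
    (x :: L).getLast? = L.getLast? := by
  cases L with
  | nil => exact absurd rfl h
  | cons a l => exact List.getLast?_cons_cons

lemma compress_ne_nil {l : List V} (h : l ≠ []) : compress l ≠ [] := by
  intro hc
  have h1 := compress_head? l
  rw [hc] at h1
  cases l with
  | nil => exact h rfl
  | cons a t => simp at h1

lemma compress_getLast? (l : List V) : (compress l).getLast? = l.getLast? := by
  induction l with
  | nil => rfl
  | cons x T ih =>
    rw [compress_cons]
    split
    · rename_i h
      cases T with
      | nil => simp at h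
      | cons t T' => rw [ih]; exact (List.getLast?_cons_cons).symm
    · cases hT : T with
      | nil => subst hT; rfl
      | cons t T' =>
        subst hT
        rw [cons_getLast?_of_ne_nil (compress_ne_nil (by simp)), ih]
        exact (List.getLast?_cons_cons).symm

lemma compress_chain' {R : V → V → Prop} {l : List V} (h : List.IsChain R l) :
    List.IsChain R (compress l) := by
  induction l with
  | nil => exact h
  | cons x T ih =>
    rw [List.isChain_cons] at h
    rw [compress_cons]
    split
    · exact ih h.2
    · rw [List.isChain_cons]
      refine ⟨fun y hy => h.1 y ?_, ih h.2⟩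
      rwa [compress_head?] at hy

lemma compress_chain'_ne (l : List V) : List.IsChain (· ≠ ·) (compress l) := by
  induction l with
  | nil => exact List.isChain_nil
  | cons x T ih =>
    rw [compress_cons]
    split
    · exact ih
    · rename_i h
      rw [List.isChain_cons]
      refine ⟨fun y hy => ?_, ih⟩
      rw [compress_head?] at hy
      intro hxy
      exact h (by rw [hy, hxy])

lemma compress_merge (X : List V) (a : V) (Y : List V) :
    compress (X ++ a :: a :: Y) = compress (X ++ a :: Y) := by
  induction X with
  | nil => simp [compress]
  | cons x X ih =>
    have hh : (X ++ a :: a :: Y).head? = (X ++ a :: Y).head? := by cases X <;> simp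
    rw [List.cons_append, List.cons_append, compress_cons, compress_cons, hh]
    split
    · exact ih
    · rw [ih]

lemma compress_split (A : List V) (c : V) (B : List V) :
    compress (A ++ c :: B) = compress (A ++ [c]) ++ (compress (c :: B)).tail := by
  induction A with
  | nil =>
    cases hcl : compress (c :: B) with
    | nil => exact absurd hcl (compress_ne_nil (by simp))
    | cons z zs =>
      have : z = c := by
        have := compress_head? (c :: B); rw [hcl] at this; simpa using this
      subst this
      simp [compress, hcl]
  | cons a A ih =>
    have hh : (A ++ c :: B).head? = (A ++ [c]).head? := by cases A <;> simp
    rw [List.cons_append, List.cons_append, compress_cons, compress_cons, hh]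
    split
    · exact ih
    · rw [ih, List.cons_append]

lemma getLast?_eq_append {X : List V} {b : V} (h : X.getLast? = some b) :
    ∃ X', X = X' ++ [b] := by
  rw [← List.head?_reverse] at h
  cases hX : X.reverse with
  | nil => rw [hX] at h; simp at h
  | cons z zs =>
    rw [hX] at h
    simp only [List.head?_cons, Option.some.injEq] at h
    subst h
    exact ⟨zs.reverse, by rw [← List.reverse_reverse X, hX]; simp⟩

lemma head?_eq_cons {Y : List V} {c : V} (h : Y.head? = some c) :
    ∃ Y', Y = c :: Y' := by
  cases Y with
  | nil => simp at h
  | cons y Y' =>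
    simp only [List.head?_cons, Option.some.injEq] at h
    exact ⟨Y', by rw [h]⟩

lemma compress_cancel_left {X Y : List V} {b : V} (h : X.getLast? = some b) :
    compress (X ++ b :: Y) = compress (X ++ Y) := by
  obtain ⟨X', rfl⟩ := getLast?_eq_append h
  have h1 : X' ++ [b] ++ b :: Y = X' ++ b :: b :: Y := by simp
  have h2 : X' ++ [b] ++ Y = X' ++ b :: Y := by simp
  rw [h1, h2, compress_merge]

lemma compress_cancel_right {X Y : List V} {b : V} (h : Y.head? = some b) :
    compress (X ++ b :: Y) = compress (X ++ Y) := by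
  cases Y with
  | nil => simp at h
  | cons y Y' =>
    simp only [List.head?_cons, Option.some.injEq] at h
    subst h
    exact compress_merge X y Y'

lemma compress_reduce_mid {X Y : List V} {b c : V} (hX : X.getLast? = some c)
    (hY : Y.head? = some c) (hcb : c ≠ b) :
    ReduceStep (compress (X ++ b :: Y)) (compress (X ++ Y)) := by
  obtain ⟨Y'', rfl⟩ := head?_eq_cons hY
  obtain ⟨X'', hX''⟩ := getLast?_eq_append hX
  have e1 : compress (X ++ [b]) = compress X ++ [b] := by
    rw [hX'']
    have h1 : X'' ++ [c] ++ [b] = X'' ++ c :: [b] := by simp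
    rw [h1, compress_split X'' c [b]]
    have h2 : compress [c, b] = [c, b] := by
      rw [compress_cons]; rw [if_neg (by simpa using Ne.symm hcb)]; rfl
    rw [h2]
    have h3 : X'' ++ [c] = X'' ++ c :: [] := by simp
    rw [h3, compress_split X'' c []]
    rfl
  have e2 : compress (c :: Y'') = c :: (compress (c :: Y'')).tail := by
    cases hcl : compress (c :: Y'') with
    | nil => exact absurd hcl (compress_ne_nil (by simp))
    | cons z zs =>
      have hz := compress_head? (c :: Y'')
      rw [hcl] at hz
      simp only [List.head?_cons, Option.some.injEq] at hz
      subst hz; rfl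
  have eL : compress (X ++ b :: c :: Y'') =
      compress X ++ [b] ++ compress (c :: Y'') := by
    rw [compress_split X b (c :: Y''), e1]
    have h4 : compress (b :: c :: Y'') = b :: compress (c :: Y'') := by
      rw [compress_cons (T := c :: Y'')]
      rw [if_neg (by simpa using hcb)]
    rw [h4]
    simp
  have eR : compress (X ++ c :: Y'') =
      compress X ++ (compress (c :: Y'')).tail := by
    rw [compress_split X c Y'']
    congr 1
    rw [hX'']
    have h5 : X'' ++ [c] ++ [c] = X'' ++ c :: c :: [] := by simp
    have h6 : X'' ++ [c] = X'' ++ c :: [] := by simp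
    rw [h5, compress_merge X'' c [], ← h6]
  obtain ⟨K, hK⟩ : ∃ K, compress X = K ++ [c] := by
    apply getLast?_eq_append
    rw [compress_getLast?]; exact hX
  rw [eL, eR, hK]
  refine ⟨K, (compress (c :: Y'')).tail, c, b, ?_, ?_⟩
  · conv_lhs => rw [e2]
    simp
  · simp

end Compress

section Subdiv

variable {V S : Type*} {G : SimpleGraph V} {d : ℕ} {Gs : SimpleGraph (V ⊕ S)}

structure SubdivData (G : SimpleGraph V) (d : ℕ) (Gs : SimpleGraph (V ⊕ S)) where
  P : G.Dart → Fin (d + 1) → V ⊕ S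
  h0 : ∀ e, P e 0 = Sum.inl e.toProd.1
  hlast : ∀ e, P e (Fin.last d) = Sum.inl e.toProd.2
  hint : ∀ e (i : Fin (d + 1)), 0 < i.val → i.val < d → ∃ s : S, P e i = Sum.inr s
  hsymm : ∀ e (i : Fin (d + 1)), P e.symm i = P e i.rev
  huniq : ∀ e e' (i i' : Fin (d + 1)), 0 < i.val → i.val < d → P e i = P e' i' →
      (e' = e ∧ i' = i) ∨ (e' = e.symm ∧ i' = i.rev)
  hadj : ∀ a b, Gs.Adj a b ↔ ∃ e, ∃ i : Fin d, P e i.castSucc = a ∧ P e i.succ = b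

noncomputable def IsEvenSubdivision.data (h : IsEvenSubdivision G d Gs) :
    SubdivData G d Gs :=
  ⟨h.choose, h.choose_spec.1, h.choose_spec.2.1, h.choose_spec.2.2.1,
    h.choose_spec.2.2.2.2.1, h.choose_spec.2.2.2.2.2.2.1, h.choose_spec.2.2.2.2.2.2.2⟩

variable (D : SubdivData G d Gs)

/-- `t` is an interior point of the subdivided edge `e`. -/
def SubdivData.Interior (e : G.Dart) (t : S) : Prop :=
  ∃ i : Fin (d + 1), 0 < i.val ∧ i.val < d ∧ D.P e i = Sum.inr t

lemma SubdivData.inl_pos {e : G.Dart} {i : Fin (d + 1)} {c : V}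
    (h : D.P e i = Sum.inl c) : i.val = 0 ∨ i.val = d := by
  by_contra hc
  push_neg at hc
  obtain ⟨s, hs⟩ := D.hint e i (by omega) (by omega)
  rw [h] at hs
  exact Sum.inl_ne_inr hs

include D in
lemma SubdivData.no_inl_adj_inl (hd : 2 ≤ d) (a b : V) :
    ¬ Gs.Adj (Sum.inl a) (Sum.inl b) := by
  rw [D.hadj]
  rintro ⟨e, j, h1, h2⟩
  have p1 := D.inl_pos h1
  have p2 := D.inl_pos h2
  rw [Fin.coe_castSucc] at p1
  rw [Fin.val_succ] at p2
  have := j.isLt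
  omega

lemma SubdivData.interior_symm {e : G.Dart} {t : S} (h : D.Interior e t) :
    D.Interior e.symm t := by
  obtain ⟨i, h1, h2, h3⟩ := h
  refine ⟨i.rev, by rw [Fin.val_rev]; omega, by rw [Fin.val_rev]; omega, ?_⟩
  rw [D.hsymm e i.rev, Fin.rev_rev]
  exact h3

/-- If `inr t` is adjacent to `inl b` then `t` is interior to a dart ending at `b`. -/
lemma SubdivData.adj_inr_exists (hd : 2 ≤ d) {t : S} {b : V}
    (h : Gs.Adj (Sum.inr t) (Sum.inl b)) :
    ∃ e : G.Dart, D.Interior e t ∧ b = e.toProd.2 := by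
  rw [D.hadj] at h
  obtain ⟨e0, j, hc, hs⟩ := h
  have p2 := D.inl_pos hs
  rw [Fin.val_succ] at p2
  have hj : j.val + 1 = d := by omega
  have hjlt := j.isLt
  refine ⟨e0, ⟨j.castSucc, by simp only [Fin.coe_castSucc, Fin.val_zero]; omega, by simp only [Fin.coe_castSucc, Fin.val_zero]; omega, hc⟩, ?_⟩
  have : j.succ = Fin.last d := by
    apply Fin.ext
    rw [Fin.val_succ, Fin.val_last]
    exact hj
  rw [this, D.hlast e0] at hs
  exact (Sum.inl.injEq _ _ ▸ hs).symm

lemma SubdivData.interior_cases {e e0 : G.Dart} {t : S}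
    (h : D.Interior e t) (h0 : D.Interior e0 t) : e = e0 ∨ e = e0.symm := by
  obtain ⟨i, h1, h2, h3⟩ := h
  obtain ⟨i0, g1, g2, g3⟩ := h0
  rcases D.huniq e e0 i i0 h1 h2 (h3.trans g3.symm) with ⟨he, -⟩ | ⟨he, -⟩
  · exact Or.inl he.symm
  · right
    rw [he, SimpleGraph.Dart.symm_symm]

lemma SubdivData.adj_inr_inl (hd : 2 ≤ d) {t : S} {b : V} {e : G.Dart}
    (h : Gs.Adj (Sum.inr t) (Sum.inl b)) (hi : D.Interior e t) :
    b = e.toProd.1 ∨ b = e.toProd.2 := by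
  obtain ⟨e0, hi0, rfl⟩ := D.adj_inr_exists hd h
  rcases D.interior_cases hi hi0 with rfl | rfl
  · exact Or.inr rfl
  · left
    rw [SimpleGraph.Dart.symm_toProd]
    rfl

lemma SubdivData.adj_inl_inr (hd : 2 ≤ d) {a : V} {t : S}
    (h : Gs.Adj (Sum.inl a) (Sum.inr t)) :
    ∃ e : G.Dart, D.Interior e t ∧ a = e.toProd.1 := by
  rw [D.hadj] at h
  obtain ⟨e0, j, hc, hs⟩ := h
  have p1 := D.inl_pos hc
  rw [Fin.coe_castSucc] at p1
  have hjlt := j.isLt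
  have hj0 : j.val = 0 := by omega
  refine ⟨e0, ⟨j.succ, by simp only [Fin.val_succ, Fin.val_zero]; omega, by simp only [Fin.val_succ, Fin.val_zero]; omega, hs⟩, ?_⟩
  have : j.castSucc = (0 : Fin (d + 1)) := by
    apply Fin.ext
    rw [Fin.coe_castSucc, hj0]
    rfl
  rw [this, D.h0 e0] at hc
  exact (Sum.inl.injEq _ _ ▸ hc).symm

lemma SubdivData.adj_inr_inr (hd : 2 ≤ d) {t t' : S} {e : G.Dart}
    (h : Gs.Adj (Sum.inr t) (Sum.inr t')) (hi : D.Interior e t) :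
    D.Interior e t' := by
  rw [D.hadj] at h
  obtain ⟨e0, j, hc, hs⟩ := h
  have hjlt := j.isLt
  have hc0 : 0 < j.val := by
    by_contra hz
    have : j.castSucc = (0 : Fin (d + 1)) := by
      apply Fin.ext; simp only [Fin.coe_castSucc, Fin.val_zero]; omega
    rw [this, D.h0 e0] at hc
    exact Sum.inl_ne_inr hc
  have hs1 : j.val + 1 < d := by
    by_contra hz
    have : j.succ = Fin.last d := by
      apply Fin.ext; simp only [Fin.val_succ, Fin.val_last]; omega
    rw [this, D.hlast e0] at hs
    exact Sum.inl_ne_inr hs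
  have hi0 : D.Interior e0 t :=
    ⟨j.castSucc, by simp only [Fin.coe_castSucc, Fin.val_zero]; omega, by simp only [Fin.coe_castSucc, Fin.val_zero]; omega, hc⟩
  have hi0' : D.Interior e0 t' :=
    ⟨j.succ, by simp only [Fin.val_succ, Fin.val_zero]; omega, by simp only [Fin.val_succ, Fin.val_zero]; omega, hs⟩
  rcases D.interior_cases hi hi0 with rfl | rfl
  · exact hi0'
  · exact D.interior_symm hi0'
    
lemma SubdivData.run_head (hd : 2 ≤ d) :
    ∀ (y : List (V ⊕ S)) (t : S) (e : G.Dart),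
      List.IsChain Gs.Adj (Sum.inr t :: y) → D.Interior e t →
      ∀ b, (y.filterMap Sum.getLeft?).head? = some b →
        b = e.toProd.1 ∨ b = e.toProd.2 := by
  intro y
  induction y with
  | nil => intro t e _ _ b hb; simp at hb
  | cons c y ih =>
    intro t e hch hi b hb
    have hadj1 : Gs.Adj (Sum.inr t) c := (List.isChain_cons_cons.mp hch).1
    cases c with
    | inl b' =>
      have hbb : b = b' := by
        simp only [List.filterMap_cons] at hb
        simp [Sum.getLeft?] at hb
        exact hb.symm
      subst hbb
      exact D.adj_inr_inl hd hadj1 hi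
    | inr t' =>
      have hi' : D.Interior e t' := D.adj_inr_inr hd hadj1 hi
      refine ih t' e (List.isChain_cons_cons.mp hch).2 hi' b ?_
      simpa [Sum.getLeft?, List.findSome?_cons] using hb

include D in
lemma SubdivData.chain_eqOrAdj (hd : 2 ≤ d) :
    ∀ (y : List (V ⊕ S)), List.IsChain Gs.Adj y →
      List.IsChain (fun a b => a = b ∨ G.Adj a b) (y.filterMap Sum.getLeft?) := by
  intro y
  induction y with
  | nil => intro _; simp
  | cons c y ih =>
    intro hch
    have htl : List.IsChain Gs.Adj y := hch.tail
    cases c with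
    | inr t => simpa [Sum.getLeft?, List.filterMap_cons] using ih htl
    | inl a =>
      have : (Sum.inl a :: y).filterMap (Sum.getLeft? (β := S)) =
          a :: y.filterMap Sum.getLeft? := by simp [Sum.getLeft?]
      rw [this, List.isChain_cons]
      refine ⟨?_, ih htl⟩
      intro b hb
      cases y with
      | nil => simp at hb
      | cons c' y' =>
        have hadj1 : Gs.Adj (Sum.inl a) c' := (List.isChain_cons_cons.mp hch).1
        cases c' with
        | inl b'' =>
          exact absurd hadj1 (D.no_inl_adj_inl hd a b'')
        | inr t =>
          obtain ⟨e, hi, ha⟩ := D.adj_inl_inr hd hadj1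
          have hrh := D.run_head hd y' t e (List.isChain_cons_cons.mp hch).2 hi b
            (by simpa [Sum.getLeft?, List.findSome?_cons] using hb)
          rcases hrh with h1 | h2
          · exact Or.inl (ha.trans h1.symm)
          · right
            rw [ha, h2]
            exact e.adj

include D in
lemma SubdivData.drc_chain (hd : 2 ≤ d) {y : List (V ⊕ S)}
    (h : List.IsChain Gs.Adj y) :
    List.IsChain G.Adj (compress (y.filterMap Sum.getLeft?)) := by
  have h1 := compress_chain' (D.chain_eqOrAdj hd y h)
  have h2 := compress_chain'_ne (y.filterMap Sum.getLeft?)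
  rw [List.isChain_iff_getElem] at h1 h2 ⊢
  intro i hi
  rcases h1 i hi with he | ha
  · exact absurd he (h2 i hi)
  · exact ha

end Subdiv

section LoopWord

variable {V : Type*}

lemma ReduceStep.isLoopWord {G : SimpleGraph V} {x : V} {l r : List V}
    (hl : IsLoopWord G x l) (h : ReduceStep l r) : IsLoopWord G x r := by
  obtain ⟨p, s, u, v, rfl, rfl⟩ := h
  obtain ⟨hch, hhd, hlast⟩ := hl
  refine ⟨?_, ?_, ?_⟩
  · rw [List.append_assoc] at hch ⊢
    unfold List.Chain' at hch ⊢
    rw [List.isChain_append] at hch ⊢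
    obtain ⟨h1, h2, h3⟩ := hch
    refine ⟨h1, ?_, ?_⟩
    · have h2' : List.IsChain G.Adj (u :: v :: u :: s) := by simpa using h2
      have := (List.isChain_cons_cons.mp (List.isChain_cons_cons.mp h2').2).2
      simpa using this
    · intro a ha y hy
      exact h3 a ha y (by simpa using hy)
  · cases p with
    | nil => simpa using hhd
    | cons a p' => simpa using hhd
  · cases s with
    | nil =>
      rw [List.append_nil] at hlast ⊢
      have h1 : p ++ [u, v, u] = (p ++ [u, v]) ++ [u] := by simp
      rw [h1, List.getLast?_concat] at hlast
      rw [List.getLast?_concat]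
      exact hlast
    | cons b s' =>
      rw [List.getLast?_append_of_ne_nil _ (by simp)] at hlast ⊢
      exact hlast

lemma rtg_isLoopWord {G : SimpleGraph V} {x : V} {l r : List V}
    (hl : IsLoopWord G x l) (h : Relation.ReflTransGen ReduceStep l r) :
    IsLoopWord G x r := by
  induction h with
  | refl => exact hl
  | tail _ hstep ih => exact hstep.isLoopWord ih

lemma reduce_isLoopWord {G : SimpleGraph V} {x : V} {l : List V}
    (hl : IsLoopWord G x l) : IsLoopWord G x (reduce l) :=
  rtg_isLoopWord hl (rtg_reduce l)

end LoopWord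

namespace GraphTower

variable (T : GraphTower)

noncomputable def SD (n : ℕ) : SubdivData (T.G n) (T.d n) (T.Gs n) :=
  (T.subdiv n).data

lemma phi_eq (n : ℕ) (w : List (T.V (n + 1))) :
    T.phi n w = compress ((w.map (T.f n)).filterMap Sum.getLeft?) := by
  rw [phi, DRC, List.filterMap_map]
  rfl

lemma map_f_chain {n : ℕ} {w : List (T.V (n + 1))}
    (h : List.IsChain (T.G (n + 1)).Adj w) :
    List.IsChain (T.Gs n).Adj (w.map (T.f n)) := by
  rw [List.isChain_map]
  exact h.imp (fun a b hab => T.f_simplicial n hab)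

lemma phi_isLoopWord {n : ℕ} {w : List (T.V (n + 1))}
    (h : IsLoopWord (T.G (n + 1)) (T.x (n + 1)) w) :
    IsLoopWord (T.G n) (T.x n) (T.phi n w) := by
  obtain ⟨hch, hhd, hlast⟩ := h
  rw [phi_eq]
  refine ⟨(T.SD n).drc_chain (T.two_le_d n) (T.map_f_chain hch), ?_, ?_⟩
  · rw [compress_head?]
    obtain ⟨w', rfl⟩ := head?_eq_cons hhd
    simp [T.f_base n, Sum.getLeft?]
  · rw [compress_getLast?]
    rw [← List.head?_reverse, ← List.filterMap_reverse, ← List.map_reverse]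
    have hx : w.reverse.head? = some (T.x (n + 1)) := by
      rw [List.head?_reverse]; exact hlast
    obtain ⟨w', hw'⟩ := head?_eq_cons hx
    rw [hw']
    simp [T.f_base n, Sum.getLeft?]

lemma phi_step {n : ℕ} {w w₂ : List (T.V (n + 1))}
    (hw : IsLoopWord (T.G (n + 1)) (T.x (n + 1)) w) (h : ReduceStep w w₂) :
    Relation.ReflTransGen ReduceStep (T.phi n w) (T.phi n w₂) := by
  obtain ⟨p, s, u, v, rfl, rfl⟩ := h
  obtain ⟨hch, hhd, hlast⟩ := hw
  have hd := T.two_le_d n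
  set f := T.f n with hf
  -- decompose the chain
  have hch' : List.IsChain (T.G (n + 1)).Adj (p ++ ([u, v, u] ++ s)) := by
    rwa [← List.append_assoc]
  rw [List.isChain_append] at hch'
  obtain ⟨hp, hmid, hbd⟩ := hch'
  have hmid' : List.IsChain (T.G (n + 1)).Adj (u :: v :: u :: s) := by simpa using hmid
  have huv : (T.G (n + 1)).Adj u v := (List.isChain_cons_cons.mp hmid').1
  have hus : List.IsChain (T.G (n + 1)).Adj (u :: s) :=
    (List.isChain_cons_cons.mp (List.isChain_cons_cons.mp hmid').2).2
  -- notation for the filterMapped pieces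
  set q : T.V n ⊕ T.S n → Option (T.V n) := Sum.getLeft? with hq
  rw [phi_eq, phi_eq]
  have hsplit : ∀ (m : List (T.V (n + 1))),
      ((p ++ m ++ s).map f).filterMap Sum.getLeft? =
        (p.map f).filterMap Sum.getLeft? ++ (m.map f).filterMap Sum.getLeft? ++
          (s.map f).filterMap Sum.getLeft? := by
    intro m
    rw [List.map_append, List.map_append, List.filterMap_append, List.filterMap_append]
  rw [hsplit, hsplit]
  set Fp := (p.map f).filterMap Sum.getLeft? with hFp
  set Fs := (s.map f).filterMap Sum.getLeft? with hFs
  cases hfu : f u with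
  | inl a =>
    cases hfv : f v with
    | inl b =>
      exact absurd (by rw [← hfu, ← hfv]; exact T.f_simplicial n huv)
        ((T.SD n).no_inl_adj_inl hd a b)
    | inr t0 =>
      have e1 : (([u, v, u].map f).filterMap Sum.getLeft?) = [a, a] := by
        simp [hfu, hfv, Sum.getLeft?, List.filterMap_cons]
      have e2 : (([u].map f).filterMap Sum.getLeft?) = [a] := by
        simp [hfu, Sum.getLeft?]
      rw [e1, e2]
      have : Fp ++ [a, a] ++ Fs = Fp ++ a :: a :: Fs := by simp
      rw [this]
      have : Fp ++ [a] ++ Fs = Fp ++ a :: Fs := by simp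
      rw [this, compress_merge]
  | inr s0 =>
    cases hfv : f v with
    | inr t0 =>
      have e1 : (([u, v, u].map f).filterMap Sum.getLeft?) = [] := by
        simp [hfu, hfv, Sum.getLeft?]
      have e2 : (([u].map f).filterMap Sum.getLeft?) = [] := by
        simp [hfu, Sum.getLeft?]
      rw [e1, e2]
    | inl b =>
      -- the interesting case
      have e1 : (([u, v, u].map f).filterMap Sum.getLeft?) = [b] := by
        simp [hfu, hfv, Sum.getLeft?, List.filterMap_cons]
      have e2 : (([u].map f).filterMap Sum.getLeft?) = [] := by
        simp [hfu, Sum.getLeft?]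
      rw [e1, e2]
      -- p and s are nonempty
      have hpne : p ≠ [] := by
        intro hpe
        subst hpe
        have : u = T.x (n + 1) := by simpa using hhd
        rw [this, hf, T.f_base n] at hfu
        exact Sum.inl_ne_inr hfu
      have hsne : s ≠ [] := by
        intro hse
        subst hse
        have : u = T.x (n + 1) := by
          rw [List.append_nil] at hlast
          have h1 : p ++ [u, v, u] = (p ++ [u, v]) ++ [u] := by simp
          rw [h1, List.getLast?_concat] at hlast
          simpa using hlast
        rw [this, hf, T.f_base n] at hfu
        exact Sum.inl_ne_inr hfu
      -- Fp and Fs are nonempty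
      have hphd : p.head? = some (T.x (n + 1)) := by
        cases p with
        | nil => exact absurd rfl hpne
        | cons a0 p' => simpa using hhd
      have hFpne : Fp ≠ [] := by
        obtain ⟨p', rfl⟩ := head?_eq_cons hphd
        rw [hFp]
        simp [hf, T.f_base n, Sum.getLeft?]
      have hslast : s.getLast? = some (T.x (n + 1)) := by
        rwa [List.getLast?_append_of_ne_nil _ hsne] at hlast
      have hFsne : Fs ≠ [] := by
        obtain ⟨s'', hs''⟩ := getLast?_eq_append hslast
        rw [hFs, hs'']
        intro hcon
        have := congrArg List.getLast? hcon
        rw [List.map_append, List.filterMap_append] at this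
        simp [hf, T.f_base n, Sum.getLeft?] at this
      obtain ⟨c, hc⟩ : ∃ c, Fp.getLast? = some c := by
        cases hFpl : Fp.getLast? with
        | none => rw [List.getLast?_eq_none_iff] at hFpl; exact absurd hFpl hFpne
        | some c => exact ⟨c, rfl⟩
      obtain ⟨c', hc'⟩ : ∃ c', Fs.head? = some c' := by
        cases hFsh : Fs.head? with
        | none => rw [List.head?_eq_none_iff] at hFsh; exact absurd hFsh hFsne
        | some c' => exact ⟨c', rfl⟩
      -- the dart e with s0 interior and b = e.2
      have hadj_ub : (T.Gs n).Adj (Sum.inr s0) (Sum.inl b) := by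
        rw [← hfu, ← hfv]; exact T.f_simplicial n huv
      obtain ⟨e, hi, hb⟩ := (T.SD n).adj_inr_exists hd hadj_ub
      -- endpoints of the run before u
      obtain ⟨a0, ha0⟩ : ∃ a0, p.getLast? = some a0 := by
        cases hpl : p.getLast? with
        | none => rw [List.getLast?_eq_none_iff] at hpl; exact absurd hpl hpne
        | some a0 => exact ⟨a0, rfl⟩
      have hAdja0u : (T.G (n + 1)).Adj a0 u := by
        have := hbd a0 ha0 u (by simp)
        exact this
      have hcE : c = e.toProd.1 ∨ c = e.toProd.2 := by
        have hchainrev : List.IsChain (T.Gs n).Adj (Sum.inr s0 :: (p.reverse.map f)) := by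
          rw [List.isChain_cons]
          constructor
          · intro y hy
            have hhdrev : (p.reverse.map f).head? = some (f a0) := by
              rw [List.head?_map, List.head?_reverse, ha0]
              rfl
            rw [hhdrev] at hy
            cases hy
            have := T.f_simplicial n hAdja0u
            rw [← hf, hfu] at this
            exact this.symm
          · rw [List.isChain_map]
            rw [List.isChain_reverse]
            exact (hp.imp (fun a b hab => (T.f_simplicial n hab).symm))
        refine (T.SD n).run_head hd (p.reverse.map f) s0 e hchainrev hi c ?_
        rw [List.filterMap_map, ← hq]
        have : p.reverse.filterMap (q ∘ f) = Fp.reverse := by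
          rw [hFp, List.filterMap_map, ← List.filterMap_reverse]
        rw [this, List.head?_reverse]
        exact hc
      obtain ⟨b0, hb0⟩ : ∃ b0, s.head? = some b0 := by
        cases hsh : s.head? with
        | none => rw [List.head?_eq_none_iff] at hsh; exact absurd hsh hsne
        | some b0 => exact ⟨b0, rfl⟩
      have hAdjub0 : (T.G (n + 1)).Adj u b0 := by
        have := (List.isChain_cons.mp hus).1 b0 hb0
        exact this
      have hc'E : c' = e.toProd.1 ∨ c' = e.toProd.2 := by
        have hchains : List.IsChain (T.Gs n).Adj (Sum.inr s0 :: s.map f) := by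
          rw [List.isChain_cons]
          constructor
          · intro y hy
            rw [List.head?_map, hb0] at hy
            cases hy
            have := T.f_simplicial n hAdjub0
            rw [← hf, hfu] at this
            exact this
          · exact T.map_f_chain (List.isChain_cons.mp hus).2
        refine (T.SD n).run_head hd (s.map f) s0 e hchains hi c' ?_
        rw [List.filterMap_map, ← hq]
        rw [hFs, List.filterMap_map] at hc'
        exact hc'
      -- now the three cases
      have hL : Fp ++ [b] ++ Fs = Fp ++ b :: Fs := by simp
      have hR : Fp ++ [] ++ Fs = Fp ++ Fs := by simp
      rw [hL, hR]
      by_cases hc1 : c = b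
      · subst hc1
        rw [compress_cancel_left hc]
      · by_cases hc2 : c' = b
        · subst hc2
          rw [compress_cancel_right hc']
        · have hce : c = e.toProd.1 := by
            rcases hcE with h1 | h1
            · exact h1
            · exact absurd (h1.trans hb.symm) hc1
          have hc'e : c' = e.toProd.1 := by
            rcases hc'E with h1 | h1
            · exact h1
            · exact absurd (h1.trans hb.symm) hc2
          have hcc' : Fs.head? = some c := by
            rw [hc', hc'e, ← hce]
          exact Relation.ReflTransGen.single (compress_reduce_mid hc hcc' hc1)

lemma phi_rtg {n : ℕ} {w w₂ : List (T.V (n + 1))}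
    (hw : IsLoopWord (T.G (n + 1)) (T.x (n + 1)) w)
    (h : Relation.ReflTransGen ReduceStep w w₂) :
    Relation.ReflTransGen ReduceStep (T.phi n w) (T.phi n w₂) := by
  induction h with
  | refl => exact .refl
  | tail hsteps hstep ih =>
    exact ih.trans (T.phi_step (rtg_isLoopWord hw hsteps) hstep)

end GraphTower

lemma monotone_bounded_eventually_constant (l : ℕ → ℕ) (B : ℕ)
    (hmono : ∀ m, l m ≤ l (m + 1)) (hbd : ∀ m, l m ≤ B) :
    ∃ M, ∀ m, M ≤ m → l m = l M := by
  have hmono' : Monotone l := monotone_nat_of_le_succ hmono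
  have key : ∀ j, (∃ m, ∀ k, l k ≤ l m) ∨ ∃ m, j ≤ l m := by
    intro j
    induction j with
    | zero => exact Or.inr ⟨0, Nat.zero_le _⟩
    | succ j ih =>
      rcases ih with h | ⟨m, hm⟩
      · exact Or.inl h
      · by_cases hmax : ∀ k, l k ≤ l m
        · exact Or.inl ⟨m, hmax⟩
        · push_neg at hmax
          obtain ⟨k, hk⟩ := hmax
          exact Or.inr ⟨k, by omega⟩
  rcases key (B + 1) with ⟨m, hm⟩ | ⟨m, hm⟩
  · exact ⟨m, fun k hk => le_antisymm (hm k) (hmono' hk)⟩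
  · have := hbd m
    omega

namespace GraphTower

variable (T : GraphTower)

lemma proj_isLoopWord (n : ℕ) : ∀ (m : ℕ) (w : List (T.V (n + m))),
    IsLoopWord (T.G (n + m)) (T.x (n + m)) w →
    IsLoopWord (T.G n) (T.x n) (T.proj n m w) := by
  intro m
  induction m with
  | zero => intro w h; exact h
  | succ m ih => intro w h; exact ih _ (T.phi_isLoopWord h)

lemma proj_rtg (n : ℕ) : ∀ (m : ℕ) (w w₂ : List (T.V (n + m))),
    IsLoopWord (T.G (n + m)) (T.x (n + m)) w →
    Relation.ReflTransGen ReduceStep w w₂ →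
    Relation.ReflTransGen ReduceStep (T.proj n m w) (T.proj n m w₂) := by
  intro m
  induction m with
  | zero => intro w w₂ _ h; exact h
  | succ m ih =>
    intro w w₂ hw h
    exact ih _ _ (T.phi_isLoopWord hw) (T.phi_rtg hw h)

/-- Transport a word along an equality of levels. -/
def castL {a b : ℕ} (h : a = b) (w : List (T.V a)) : List (T.V b) := h ▸ w

lemma phi_castL {a b : ℕ} (h : a = b) (w : List (T.V (a + 1))) :
    T.phi b (T.castL (by rw [h]) w) = T.castL h (T.phi a w) := by
  subst h; rfl

lemma seq_castL (g : ∀ k, List (T.V k)) {a b : ℕ} (h : a = b) :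
    T.castL h (g a) = g b := by
  subst h; rfl

lemma proj_peel (n : ℕ) : ∀ (m : ℕ) (w : List (T.V (n + 1 + m))),
    T.proj n (m + 1) (T.castL (by omega) w) = T.phi n (T.proj (n + 1) m w) := by
  intro m
  induction m with
  | zero => intro w; rfl
  | succ m ih =>
    intro w
    refine Eq.trans ?_ (ih (T.phi (n + 1 + m) w))
    show T.proj n (m + 1) (T.phi (n + m + 1) (T.castL (by omega) w)) =
      T.proj n (m + 1) (T.castL (by omega) (T.phi (n + 1 + m) w))
    congr 1
    exact T.phi_castL (show n + 1 + m = n + m + 1 by omega) w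

lemma proj_peel' (n m : ℕ) (g : ∀ k, List (T.V k)) :
    T.proj n (m + 1) (g (n + m + 1)) = T.phi n (T.proj (n + 1) m (g (n + 1 + m))) := by
  rw [← T.proj_peel n m (g (n + 1 + m))]
  congr 1
  exact (T.seq_castL g (show n + 1 + m = n + m + 1 by omega)).symm

end GraphTower

/-- `Ω' = 𝒢`. Termwise reduction of any `(ω_n)_n ∈ Ω` lies in `G`
and is locally eventually constant; conversely every locally eventually constant
`(g_n)_n ∈ G` is the termwise reduction of some `(ω_n)_n ∈ Ω`. -/
theorem statement_3 (T : GraphTower) :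
    (∀ ω, T.MemOmega ω →
      T.MemG (fun n => reduce (ω n)) ∧ T.LEC (fun n => reduce (ω n))) ∧
    (∀ g, T.MemG g → T.LEC g →
      ∃ ω, T.MemOmega ω ∧ ∀ n, reduce (ω n) = g n) := by
  constructor
  · -- Ω' ⊆ 𝒢
    intro ω hω
    obtain ⟨hlw, hcoh⟩ := hω
    have hproj : ∀ n m, T.proj n m (ω (n + m)) = ω n := by
      intro n m
      induction m with
      | zero => rfl
      | succ m ih =>
        show T.proj n m (T.phi (n + m) (ω (n + m + 1))) = ω n
        rw [hcoh (n + m)]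
        exact ih
    -- the reduction of the projection rewinds
    have h1 : ∀ k, Relation.ReflTransGen ReduceStep (ω k)
        (T.phi k (reduce (ω (k + 1)))) := by
      intro k
      have := T.phi_rtg (hlw (k + 1)) (rtg_reduce (ω (k + 1)))
      rwa [hcoh k] at this
    have hphi_red : ∀ k, Relation.ReflTransGen ReduceStep
        (T.phi k (reduce (ω (k + 1)))) (reduce (ω k)) := by
      intro k
      have h2 := rtg_reduce (T.phi k (reduce (ω (k + 1))))
      rwa [← reduce_eq_of_rtg (h1 k)] at h2
    constructor
    · -- membership in G
      refine ⟨fun n => ⟨reduce_isLoopWord (hlw n), reduce_isReduced _⟩, fun n => ?_⟩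
      show reduce (T.phi n (reduce (ω (n + 1)))) = reduce (ω n)
      rw [← reduce_eq_of_rtg (h1 n)]
    · -- local eventual constancy
      intro n
      set a : ℕ → List (T.V n) := fun m => T.proj n m (reduce (ω (n + m))) with ha
      have hA1 : ∀ m, Relation.ReflTransGen ReduceStep (ω n) (a m) := by
        intro m
        have := T.proj_rtg n m (ω (n + m)) (reduce (ω (n + m))) (hlw _)
          (rtg_reduce (ω (n + m)))
        rwa [hproj n m] at this
      have hA2 : ∀ m, Relation.ReflTransGen ReduceStep (a (m + 1)) (a m) := by
        intro m
        show Relation.ReflTransGen ReduceStep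
          (T.proj n m (T.phi (n + m) (reduce (ω (n + m + 1))))) (a m)
        exact T.proj_rtg n m _ _ (T.phi_isLoopWord (reduce_isLoopWord (hlw _)))
          (hphi_red (n + m))
      obtain ⟨M, hM⟩ := monotone_bounded_eventually_constant (fun m => (a m).length)
        (ω n).length (fun m => (rtg_length_le (hA2 m)).1)
        (fun m => (rtg_length_le (hA1 m)).1)
      refine ⟨M, fun m hm => ?_⟩
      show a m = a M
      induction m, hm using Nat.le_induction with
      | base => rfl
      | succ m hm ih =>
        have heq : (a m).length = (a (m + 1)).length := by
          rw [hM m hm, hM (m + 1) (by omega)]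
        exact ((rtg_length_le (hA2 m)).2 heq).symm.trans ih
  · -- 𝒢 ⊆ Ω'
    intro g hg hlec
    obtain ⟨hglw, hgcoh⟩ := hg
    choose M hM using hlec
    have hphi_g : ∀ k, Relation.ReflTransGen ReduceStep (T.phi k (g (k + 1))) (g k) := by
      intro k
      have := rtg_reduce (T.phi k (g (k + 1)))
      rwa [hgcoh k] at this
    have hA2 : ∀ n m, Relation.ReflTransGen ReduceStep
        (T.proj n (m + 1) (g (n + m + 1))) (T.proj n m (g (n + m))) := by
      intro n m
      show Relation.ReflTransGen ReduceStep
        (T.proj n m (T.phi (n + m) (g (n + m + 1)))) _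
      exact T.proj_rtg n m _ _ (T.phi_isLoopWord (hglw (n + m + 1)).1) (hphi_g (n + m))
    have hred : ∀ n m, reduce (T.proj n m (g (n + m))) = g n := by
      intro n m
      induction m with
      | zero => exact (hglw n).2.reduce_eq
      | succ m ih =>
        show reduce (T.proj n (m + 1) (g (n + m + 1))) = g n
        rw [reduce_eq_of_rtg (hA2 n m), ih]
    refine ⟨fun n => T.proj n (M n) (g (n + M n)), ⟨fun n => T.proj_isLoopWord n (M n) _
      (hglw (n + M n)).1, fun n => ?_⟩, fun n => hred n (M n)⟩
    -- coherence of the stabilized sequence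
    have hm1 : M (n + 1) ≤ max (M (n + 1)) (M n) := le_max_left _ _
    have hm2 : M n ≤ max (M (n + 1)) (M n) + 1 := by
      have := le_max_right (M (n + 1)) (M n); omega
    set m := max (M (n + 1)) (M n) with hmdef
    have e1 : T.proj (n + 1) (M (n + 1)) (g (n + 1 + M (n + 1))) =
        T.proj (n + 1) m (g (n + 1 + m)) := (hM (n + 1) m hm1).symm
    show T.phi n (T.proj (n + 1) (M (n + 1)) (g (n + 1 + M (n + 1)))) =
      T.proj n (M n) (g (n + M n))
    rw [e1, ← T.proj_peel' n m g]
    exact hM n (m + 1) hm2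

end GCG
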